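/- Vovk's aggregating algorithm guarantee: under realizability by an expert e*, i.e. each outcome o_h is drawn from p^{(e*)}(c_h) conditionally on the context c_h and the past, the predictions q̂_h = E_{e∼q̃_h}[p^{(e)}(c_h)] with exponential weights q̃_h^{(e)} ∝ exp(−Σ_{υ<h} log(1/p^{(e)}(c_υ)(o_υ))) satisfy (1/H) Σ_{h=1}^H E[D_TV(q̂_h, p^{(e*)}(c_h))] ≤ sqrt(log|E|/H). -/

import Mathlib

set_option linter.unusedSectionVars false

open Finset

namespace VovkProof



lemma tv_sq_le_kl {O : Type} [Fintype O] (P Q : O → ℝ)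
    (hP : ∀ v, 0 ≤ P v) (hQ : ∀ v, 0 ≤ Q v) (hPs : ∑ v, P v = 1) (hQs : ∑ v, Q v = 1)
    (hpos : ∀ v, 0 < P v → 0 < Q v) :
    ((1 / 2 : ℝ) * ∑ v, |Q v - P v|) ^ 2
      ≤ ∑ v, P v * (if 0 < P v then Real.log (P v / Q v) else 0) := by
  classical
  set BC : ℝ := ∑ v, Real.sqrt (P v * Q v) with hBCdef
  have hBCnn : 0 ≤ BC := sum_nonneg fun v _ => Real.sqrt_nonneg _
  -- Cauchy-Schwarz bound on the TV distance
  have key : ∀ v, |Q v - P v| = |Real.sqrt (Q v) - Real.sqrt (P v)|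
      * (Real.sqrt (Q v) + Real.sqrt (P v)) := by
    intro v
    rw [← abs_of_nonneg (add_nonneg (Real.sqrt_nonneg (Q v)) (Real.sqrt_nonneg (P v))),
      ← abs_mul]
    congr 1
    have h1 : Real.sqrt (Q v) * Real.sqrt (Q v) = Q v := Real.mul_self_sqrt (hQ v)
    have h2 : Real.sqrt (P v) * Real.sqrt (P v) = P v := Real.mul_self_sqrt (hP v)
    ring_nf
    nlinarith [h1, h2]
  have hsq1 : ∑ v, |Real.sqrt (Q v) - Real.sqrt (P v)| ^ 2 = 2 - 2 * BC := by
    have : ∀ v, |Real.sqrt (Q v) - Real.sqrt (P v)| ^ 2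
        = Q v + P v - 2 * Real.sqrt (P v * Q v) := by
      intro v
      rw [sq_abs]
      have h1 : Real.sqrt (Q v) * Real.sqrt (Q v) = Q v := Real.mul_self_sqrt (hQ v)
      have h2 : Real.sqrt (P v) * Real.sqrt (P v) = P v := Real.mul_self_sqrt (hP v)
      have h3 : Real.sqrt (P v * Q v) = Real.sqrt (P v) * Real.sqrt (Q v) :=
        Real.sqrt_mul (hP v) _
      nlinarith [h1, h2, h3]
    rw [sum_congr rfl fun v _ => this v]
    simp only [sum_sub_distrib, sum_add_distrib, hPs, hQs, ← mul_sum, ← hBCdef]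
    ring
  have hsq2 : ∑ v, (Real.sqrt (Q v) + Real.sqrt (P v)) ^ 2 = 2 + 2 * BC := by
    have : ∀ v, (Real.sqrt (Q v) + Real.sqrt (P v)) ^ 2
        = Q v + P v + 2 * Real.sqrt (P v * Q v) := by
      intro v
      have h1 : Real.sqrt (Q v) * Real.sqrt (Q v) = Q v := Real.mul_self_sqrt (hQ v)
      have h2 : Real.sqrt (P v) * Real.sqrt (P v) = P v := Real.mul_self_sqrt (hP v)
      have h3 : Real.sqrt (P v * Q v) = Real.sqrt (P v) * Real.sqrt (Q v) :=
        Real.sqrt_mul (hP v) _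
      nlinarith [h1, h2, h3]
    rw [sum_congr rfl fun v _ => this v]
    simp only [sum_add_distrib, hPs, hQs, ← mul_sum, ← hBCdef]
    ring
  have hTV : (∑ v, |Q v - P v|) ^ 2 ≤ 4 * (2 * (1 - BC)) := by
    have cs := Finset.sum_mul_sq_le_sq_mul_sq univ
      (fun v => |Real.sqrt (Q v) - Real.sqrt (P v)|) (fun v => Real.sqrt (Q v) + Real.sqrt (P v))
    rw [sum_congr rfl fun v _ => key v] at *
    calc (∑ v, |Real.sqrt (Q v) - Real.sqrt (P v)| * (Real.sqrt (Q v) + Real.sqrt (P v))) ^ 2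
        ≤ (∑ v, |Real.sqrt (Q v) - Real.sqrt (P v)| ^ 2)
            * ∑ v, (Real.sqrt (Q v) + Real.sqrt (P v)) ^ 2 := cs
      _ = (2 - 2 * BC) * (2 + 2 * BC) := by rw [hsq1, hsq2]
      _ ≤ 4 * (2 * (1 - BC)) := by nlinarith [sq_nonneg (1 - BC)]
  -- the KL lower bound via Jensen
  have hex : ∃ v, 0 < P v := by
    by_contra hcon
    push_neg at hcon
    have : ∑ v, P v = 0 := sum_eq_zero fun v _ => le_antisymm (hcon v) (hP v)
    rw [hPs] at this; norm_num at this
  obtain ⟨v₀, hv₀⟩ := hex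
  have hBCpos : 0 < BC := by
    refine sum_pos' (fun v _ => Real.sqrt_nonneg _) ⟨v₀, mem_univ _, ?_⟩
    exact Real.sqrt_pos.2 (mul_pos hv₀ (hpos v₀ hv₀))
  set S : Finset O := univ.filter (fun v => 0 < P v) with hSdef
  have hPS : ∑ v ∈ S, P v = 1 := by
    rw [← hPs, ← Finset.sum_filter_add_sum_filter_not univ (fun v => 0 < P v) P]
    have : ∑ v ∈ univ.filter (fun v => ¬ 0 < P v), P v = 0 := by
      refine sum_eq_zero fun v hv => ?_
      simp only [mem_filter] at hv
      exact le_antisymm (not_lt.1 hv.2) (hP v)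
    rw [this, add_zero]
  have hBCS : ∑ v ∈ S, P v * Real.sqrt (Q v / P v) = BC := by
    rw [hBCdef, ← Finset.sum_filter_add_sum_filter_not univ (fun v => 0 < P v)
      (fun v => Real.sqrt (P v * Q v))]
    have hz : ∑ v ∈ univ.filter (fun v => ¬ 0 < P v), Real.sqrt (P v * Q v) = 0 := by
      refine sum_eq_zero fun v hv => ?_
      simp only [mem_filter] at hv
      have : P v = 0 := le_antisymm (not_lt.1 hv.2) (hP v)
      simp [this]
    rw [hz, add_zero]
    refine sum_congr rfl fun v hv => ?_
    simp only [hSdef, mem_filter] at hv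
    have hPv : 0 < P v := hv.2
    rw [show P v * Real.sqrt (Q v / P v) = Real.sqrt (P v ^ 2) * Real.sqrt (Q v / P v) by
      rw [Real.sqrt_sq (hP v)]]
    rw [← Real.sqrt_mul (sq_nonneg _)]
    congr 1
    field_simp
  have jen : ∑ v ∈ S, P v * Real.log (Real.sqrt (Q v / P v)) ≤ Real.log BC := by
    have hcc : ConcaveOn ℝ (Set.Ioi (0:ℝ)) Real.log := strictConcaveOn_log_Ioi.concaveOn
    have := hcc.le_map_sum (t := S) (w := fun v => P v)
      (p := fun v => Real.sqrt (Q v / P v))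
      (fun v hv => hP v) hPS
      (fun v hv => by
        simp only [hSdef, mem_filter] at hv
        exact Set.mem_Ioi.2 (Real.sqrt_pos.2 (div_pos (hpos v hv.2) hv.2)))
    simpa only [smul_eq_mul, hBCS] using this
  have hKLS : ∑ v, P v * (if 0 < P v then Real.log (P v / Q v) else 0)
      = ∑ v ∈ S, P v * Real.log (P v / Q v) := by
    rw [hSdef, Finset.sum_filter]
    refine sum_congr rfl fun v _ => ?_
    split_ifs with h <;> simp
  have hlogs : ∀ v ∈ S, P v * Real.log (Real.sqrt (Q v / P v))
      = -(1/2) * (P v * Real.log (P v / Q v)) := by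
    intro v hv
    simp only [hSdef, mem_filter] at hv
    have hPv : 0 < P v := hv.2
    have hQv : 0 < Q v := hpos v hPv
    rw [Real.log_sqrt (le_of_lt (div_pos hQv hPv)),
      show Q v / P v = (P v / Q v)⁻¹ by rw [inv_div], Real.log_inv]
    ring
  have hKL : 2 * (1 - BC) ≤ ∑ v, P v * (if 0 < P v then Real.log (P v / Q v) else 0) := by
    rw [hKLS]
    have h1 : ∑ v ∈ S, P v * Real.log (Real.sqrt (Q v / P v))
        = -(1/2) * ∑ v ∈ S, P v * Real.log (P v / Q v) := by
      rw [sum_congr rfl hlogs, ← mul_sum]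
    rw [h1] at jen
    have hlb : Real.log BC ≤ BC - 1 := Real.log_le_sub_one_of_pos hBCpos
    linarith
  nlinarith [hTV, hKL, abs_nonneg (Q v₀ - P v₀),
    sum_nonneg (fun v (_ : v ∈ (univ : Finset O)) => abs_nonneg (Q v - P v))]


variable {H : ℕ} {C O E : Type} [Fintype C] [Fintype O] [Fintype E]

/-- prefix product of expert `e`'s probabilities over rounds `j < k` -/
noncomputable def pref (p : E → C → O → ℝ) (ctx : (Fin H → O) → Fin H → C)
    (e : E) (k : ℕ) (o : Fin H → O) : ℝ :=
  ∏ j ∈ univ.filter (fun j : Fin H => (j : ℕ) < k), p e (ctx o j) (o j)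

/-- total weight -/
noncomputable def wsum (p : E → C → O → ℝ) (ctx : (Fin H → O) → Fin H → C) (k : ℕ) (o : Fin H → O) : ℝ :=
  ∑ e, pref p ctx e k o

/-- numerator of the aggregated prediction -/
noncomputable def wnum (p : E → C → O → ℝ) (ctx : (Fin H → O) → Fin H → C) (h : Fin H) (o : Fin H → O)
    (v : O) : ℝ :=
  ∑ e, pref p ctx e (h : ℕ) o * p e (ctx o h) v

/-- pointwise log-loss regret term -/
noncomputable def ell (p : E → C → O → ℝ) (ctx : (Fin H → O) → Fin H → C) (estar : E)
    (h : Fin H) (o : Fin H → O) (v : O) : ℝ :=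
  if 0 < p estar (ctx o h) v ∧ 0 < pref p ctx estar (h : ℕ) o then
    Real.log (p estar (ctx o h) v * wsum p ctx (h : ℕ) o / wnum p ctx h o v) else 0

/-- per-round conditional KL divergence -/
noncomputable def klterm (p : E → C → O → ℝ) (ctx : (Fin H → O) → Fin H → C) (estar : E)
    (h : Fin H) (o : Fin H → O) : ℝ :=
  ∑ v, p estar (ctx o h) v * ell p ctx estar h o v

/-- per-round total variation term -/
noncomputable def tvterm (p : E → C → O → ℝ) (ctx : (Fin H → O) → Fin H → C) (estar : E)
    (h : Fin H) (o : Fin H → O) : ℝ :=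
  (1 / 2 : ℝ) * ∑ v, |wnum p ctx h o v / wsum p ctx (h : ℕ) o - p estar (ctx o h) v|

section lemmas

variable (p : E → C → O → ℝ) (ctx : (Fin H → O) → Fin H → C) (estar : E)

lemma filter_succ (k : ℕ) (hk : k < H) :
    (univ.filter (fun j : Fin H => (j : ℕ) < k + 1))
      = insert ⟨k, hk⟩ (univ.filter (fun j : Fin H => (j : ℕ) < k)) := by
  ext j
  simp only [mem_filter, mem_univ, true_and, mem_insert, Fin.ext_iff]
  omega

lemma pref_succ (e : E) (i : Fin H) (o : Fin H → O) :
    pref p ctx e ((i : ℕ) + 1) o = pref p ctx e (i : ℕ) o * p e (ctx o i) (o i) := by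
  unfold pref
  rw [filter_succ (i : ℕ) i.isLt, prod_insert (by simp)]
  simp [mul_comm, Fin.eta]

lemma pref_zero (e : E) (o : Fin H → O) : pref p ctx e 0 o = 1 := by
  unfold pref
  rw [filter_false_of_mem (by simp), prod_empty]

lemma pref_nonneg (hpnn : ∀ e c o, 0 ≤ p e c o) (e : E) (k : ℕ) (o : Fin H → O) :
    0 ≤ pref p ctx e k o :=
  prod_nonneg fun _ _ => hpnn _ _ _

variable (hctx : ∀ o o' h, (∀ j : Fin H, j < h → o j = o' j) → ctx o h = ctx o' h)
variable (hpsum : ∀ e c, ∑ o, p e c o = 1)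

include hctx in
lemma ctx_update (o : Fin H → O) (i h : Fin H) (w : O) (hih : (h : ℕ) ≤ (i : ℕ)) :
    ctx (Function.update o i w) h = ctx o h := by
  refine hctx _ _ h fun j hj => ?_
  have hj' : (j : ℕ) < (h : ℕ) := hj
  refine Function.update_of_ne ?_ _ _
  intro hji
  subst hji
  omega

include hctx in
lemma pref_update (e : E) (o : Fin H → O) (i : Fin H) (w : O) (k : ℕ) (hk : k ≤ (i : ℕ)) :
    pref p ctx e k (Function.update o i w) = pref p ctx e k o := by
  unfold pref
  refine prod_congr rfl fun j hj => ?_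
  simp only [mem_filter, mem_univ, true_and] at hj
  have hji : (j : ℕ) < (i : ℕ) := lt_of_lt_of_le hj hk
  have hne : j ≠ i := by intro hji'; subst hji'; omega
  rw [ctx_update ctx hctx o i j w (le_of_lt hji), Function.update_of_ne hne]

include hctx in
lemma wsum_update (o : Fin H → O) (i : Fin H) (w : O) (k : ℕ) (hk : k ≤ (i : ℕ)) :
    wsum p ctx k (Function.update o i w) = wsum p ctx k o := by
  unfold wsum
  exact Finset.sum_congr rfl fun e _ => pref_update p ctx hctx e o i w k hk

include hctx in
lemma wnum_update (o : Fin H → O) (i h : Fin H) (w : O) (v : O) (hk : (h : ℕ) ≤ (i : ℕ)) :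
    wnum p ctx h (Function.update o i w) v = wnum p ctx h o v := by
  unfold wnum
  refine Finset.sum_congr rfl fun e _ => ?_
  rw [pref_update p ctx hctx e o i w _ hk, ctx_update ctx hctx o i h w hk]

include hctx in
lemma ell_update (o : Fin H → O) (i h : Fin H) (w : O) (v : O) (hk : (h : ℕ) ≤ (i : ℕ)) :
    ell p ctx estar h (Function.update o i w) v = ell p ctx estar h o v := by
  unfold ell
  rw [pref_update p ctx hctx estar o i w _ hk, ctx_update ctx hctx o i h w hk,
    wsum_update p ctx hctx o i w _ hk, wnum_update p ctx hctx o i h w v hk]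

include hctx in
lemma klterm_update (o : Fin H → O) (i h : Fin H) (w : O) (hk : (h : ℕ) ≤ (i : ℕ)) :
    klterm p ctx estar h (Function.update o i w) = klterm p ctx estar h o := by
  unfold klterm
  refine Finset.sum_congr rfl fun v _ => ?_
  rw [ctx_update ctx hctx o i h w hk, ell_update p ctx estar hctx o i h w v hk]

lemma wsum_succ (i : Fin H) (o : Fin H → O) :
    wsum p ctx ((i : ℕ) + 1) o = wnum p ctx i o (o i) := by
  unfold wsum wnum
  exact Finset.sum_congr rfl fun e _ => pref_succ p ctx e i o

lemma sum_update (φ : (Fin H → O) → ℝ) (i : Fin H) :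
    ∑ o : Fin H → O, ∑ v : O, φ (Function.update o i v)
      = (Fintype.card O : ℝ) * ∑ o : Fin H → O, φ o := by
  have hinv : Function.Involutive
      (fun x : (Fin H → O) × O => (Function.update x.1 i x.2, x.1 i)) := by
    intro x
    simp [Function.update_idem, Function.update_eq_self]
  calc ∑ o : Fin H → O, ∑ v : O, φ (Function.update o i v)
      = ∑ x : (Fin H → O) × O, φ (Function.update x.1 i x.2) := by
        rw [Fintype.sum_prod_type]
    _ = ∑ x : (Fin H → O) × O, φ x.1 :=
        Fintype.sum_bijective _ hinv.bijective _ _ (fun x => rfl)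
    _ = (Fintype.card O : ℝ) * ∑ o : Fin H → O, φ o := by
        rw [Fintype.sum_prod_type]
        simp only [sum_const, card_univ, nsmul_eq_mul]
        rw [← mul_sum]

include hctx in
lemma step (i : Fin H) (ψ : (Fin H → O) → O → ℝ)
    (hψ : ∀ o w v, ψ (Function.update o i w) v = ψ o v) :
    (Fintype.card O : ℝ) * ∑ o : Fin H → O, pref p ctx estar ((i : ℕ) + 1) o * ψ o (o i)
      = ∑ o : Fin H → O, pref p ctx estar (i : ℕ) o * ∑ v, p estar (ctx o i) v * ψ o v := by
  rw [← sum_update (fun o => pref p ctx estar ((i : ℕ) + 1) o * ψ o (o i)) i]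
  refine Finset.sum_congr rfl fun o _ => ?_
  rw [mul_sum]
  refine Finset.sum_congr rfl fun v _ => ?_
  have h1 : Function.update o i v i = v := Function.update_self _ _ _
  rw [h1, hψ, pref_succ, pref_update p ctx hctx estar o i v _ (le_refl _),
    ctx_update ctx hctx o i i v (le_refl _), h1]
  ring

include hctx hpsum in
lemma lemA : ∀ d k, k + d = H → ∀ g : (Fin H → O) → ℝ,
    (∀ (o : Fin H → O) (i : Fin H) (w : O), k ≤ (i : ℕ) → g (Function.update o i w) = g o) →
    (Fintype.card O : ℝ) ^ d * ∑ o : Fin H → O, pref p ctx estar H o * g o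
      = ∑ o : Fin H → O, pref p ctx estar k o * g o := by
  intro d
  induction d with
  | zero =>
      intro k hk g hg
      obtain rfl : k = H := by omega
      simp
  | succ d ih =>
      intro k hk g hg
      have hkH : k < H := by omega
      have h1 := ih (k + 1) (by omega) g (fun o i w hi => hg o i w (by omega))
      have h2 := step p ctx estar hctx ⟨k, hkH⟩ (fun o _ => g o)
        (fun o w v => hg o ⟨k, hkH⟩ w (le_refl _))
      calc (Fintype.card O : ℝ) ^ (d + 1) * ∑ o : Fin H → O, pref p ctx estar H o * g o
          = (Fintype.card O : ℝ) *
              ((Fintype.card O : ℝ) ^ d * ∑ o : Fin H → O, pref p ctx estar H o * g o) := by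
            ring
        _ = (Fintype.card O : ℝ) * ∑ o : Fin H → O, pref p ctx estar (k + 1) o * g o := by
            rw [h1]
        _ = ∑ o : Fin H → O, pref p ctx estar k o *
              ∑ v, p estar (ctx o ⟨k, hkH⟩) v * g o := h2
        _ = ∑ o : Fin H → O, pref p ctx estar k o * g o := by
            refine Finset.sum_congr rfl fun o _ => ?_
            rw [← Finset.sum_mul, hpsum, one_mul]

lemma filter_lt_H : univ.filter (fun j : Fin H => (j : ℕ) < H) = univ :=
  filter_true_of_mem fun j _ => j.isLt

lemma pref_pos (hpnn : ∀ e c o, 0 ≤ p e c o) (o : Fin H → O)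
    (hpos : 0 < pref p ctx estar H o) (k : ℕ) : 0 < pref p ctx estar k o := by
  have hfac : ∀ j : Fin H, 0 < p estar (ctx o j) (o j) := by
    intro j
    have hne : p estar (ctx o j) (o j) ≠ 0 := by
      intro h0
      have hz : pref p ctx estar H o = 0 := by
        unfold pref
        exact prod_eq_zero (by simp [filter_lt_H]) h0
      rw [hz] at hpos
      exact lt_irrefl _ hpos
    exact lt_of_le_of_ne (hpnn _ _ _) (Ne.symm hne)
  exact prod_pos fun j _ => hfac j

lemma telescope (hpnn : ∀ e c o, 0 ≤ p e c o) (o : Fin H → O)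
    (hpos : 0 < pref p ctx estar H o) :
    ∑ h : Fin H, ell p ctx estar h o (o h) ≤ Real.log (Fintype.card E) := by
  have hfac : ∀ j : Fin H, 0 < p estar (ctx o j) (o j) := by
    intro j
    have hne : p estar (ctx o j) (o j) ≠ 0 := by
      intro h0
      have hz : pref p ctx estar H o = 0 := by
        unfold pref
        exact prod_eq_zero (by simp [filter_lt_H]) h0
      rw [hz] at hpos
      exact lt_irrefl _ hpos
    exact lt_of_le_of_ne (hpnn _ _ _) (Ne.symm hne)
  have hpref : ∀ k, 0 < pref p ctx estar k o := fun k => prod_pos fun j _ => hfac j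
  have hprefW : ∀ k, pref p ctx estar k o ≤ wsum p ctx k o := fun k =>
    single_le_sum (f := fun e => pref p ctx e k o)
      (fun e _ => pref_nonneg p ctx hpnn e k o) (mem_univ estar)
  have hW : ∀ k, 0 < wsum p ctx k o := fun k => lt_of_lt_of_le (hpref k) (hprefW k)
  have hterm : ∀ h : Fin H, ell p ctx estar h o (o h)
      = Real.log (p estar (ctx o h) (o h))
        + (Real.log (wsum p ctx (h : ℕ) o) - Real.log (wsum p ctx ((h : ℕ) + 1) o)) := by
    intro h
    unfold ell
    rw [if_pos ⟨hfac h, hpref _⟩, ← wsum_succ p ctx h o,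
      Real.log_div (ne_of_gt (mul_pos (hfac h) (hW _))) (ne_of_gt (hW _)),
      Real.log_mul (ne_of_gt (hfac h)) (ne_of_gt (hW _))]
    ring
  rw [sum_congr rfl fun h _ => hterm h, sum_add_distrib]
  have h1 : ∑ h : Fin H, Real.log (p estar (ctx o h) (o h)) = Real.log (pref p ctx estar H o) := by
    rw [show pref p ctx estar H o = ∏ j : Fin H, p estar (ctx o j) (o j) by
      unfold pref; rw [filter_lt_H],
      Real.log_prod (fun j _ => ne_of_gt (hfac j))]
  have h2 : ∑ h : Fin H, (Real.log (wsum p ctx (h : ℕ) o) - Real.log (wsum p ctx ((h : ℕ) + 1) o))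
      = Real.log (wsum p ctx 0 o) - Real.log (wsum p ctx H o) := by
    rw [Fin.sum_univ_eq_sum_range
      (fun k => Real.log (wsum p ctx k o) - Real.log (wsum p ctx (k + 1) o)) H]
    exact Finset.sum_range_sub' (fun k => Real.log (wsum p ctx k o)) H
  have h3 : wsum p ctx 0 o = (Fintype.card E : ℝ) := by
    unfold wsum
    simp [pref_zero, card_univ]
  have h4 : Real.log (pref p ctx estar H o) ≤ Real.log (wsum p ctx H o) :=
    Real.log_le_log (hpref H) (hprefW H)
  rw [h1, h2, h3]
  linarith

include hctx hpsum in
lemma tower [Nonempty O] (h : Fin H) :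
    ∑ o : Fin H → O, pref p ctx estar H o * klterm p ctx estar h o
      = ∑ o : Fin H → O, pref p ctx estar H o * ell p ctx estar h o (o h) := by
  have hcO : (0 : ℝ) < (Fintype.card O : ℝ) := by exact_mod_cast Fintype.card_pos
  have hg1 : ∀ (o : Fin H → O) (i : Fin H) (w : O), (h : ℕ) + 1 ≤ (i : ℕ) →
      ell p ctx estar h (Function.update o i w) ((Function.update o i w) h)
        = ell p ctx estar h o (o h) := by
    intro o i w hi
    have hne : h ≠ i := by
      intro he; subst he; omega
    rw [Function.update_of_ne hne, ell_update p ctx estar hctx o i h w _ (by omega)]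
  have hA1 := lemA p ctx estar hctx hpsum (H - ((h : ℕ) + 1)) ((h : ℕ) + 1) (by omega)
    (fun o => ell p ctx estar h o (o h)) hg1
  have hA2 := lemA p ctx estar hctx hpsum (H - (h : ℕ)) (h : ℕ) (by omega)
    (klterm p ctx estar h)
    (fun o i w hi => klterm_update p ctx estar hctx o i h w hi)
  have hB := step p ctx estar hctx h (ell p ctx estar h)
    (fun o w v => ell_update p ctx estar hctx o h h w v (le_refl _))
  have hexp : H - (h : ℕ) = (H - ((h : ℕ) + 1)) + 1 := by omega
  have key : (Fintype.card O : ℝ) ^ (H - (h : ℕ))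
        * ∑ o : Fin H → O, pref p ctx estar H o * klterm p ctx estar h o
      = (Fintype.card O : ℝ) ^ (H - (h : ℕ))
        * ∑ o : Fin H → O, pref p ctx estar H o * ell p ctx estar h o (o h) := by
    rw [hA2, hexp, pow_succ]
    symm
    calc (Fintype.card O : ℝ) ^ (H - ((h : ℕ) + 1)) * (Fintype.card O : ℝ)
          * ∑ o : Fin H → O, pref p ctx estar H o * ell p ctx estar h o (o h)
        = (Fintype.card O : ℝ) ^ (H - ((h : ℕ) + 1))
          * ((Fintype.card O : ℝ)
            * ∑ o : Fin H → O, pref p ctx estar H o * ell p ctx estar h o (o h)) := by ring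
      _ = (Fintype.card O : ℝ) ^ (H - ((h : ℕ) + 1))
          * ((Fintype.card O : ℝ)
            * ((Fintype.card O : ℝ) ^ (H - ((h : ℕ) + 1))
              * ∑ o : Fin H → O, pref p ctx estar H o * ell p ctx estar h o (o h))
            / (Fintype.card O : ℝ) ^ (H - ((h : ℕ) + 1))) := by
            rw [mul_div_assoc]
            rw [mul_div_cancel_left₀ _ (ne_of_gt (pow_pos hcO _))]
      _ = (Fintype.card O : ℝ) ^ (H - ((h : ℕ) + 1))
          * ((Fintype.card O : ℝ)
            * (∑ o : Fin H → O, pref p ctx estar ((h : ℕ) + 1) o * ell p ctx estar h o (o h))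
            / (Fintype.card O : ℝ) ^ (H - ((h : ℕ) + 1))) := by rw [hA1]
      _ = (Fintype.card O : ℝ) ^ (H - ((h : ℕ) + 1))
          * ((∑ o : Fin H → O, pref p ctx estar (h : ℕ) o * klterm p ctx estar h o)
            / (Fintype.card O : ℝ) ^ (H - ((h : ℕ) + 1))) := by
            rw [hB]; rfl
      _ = ∑ o : Fin H → O, pref p ctx estar (h : ℕ) o * klterm p ctx estar h o := by
            rw [mul_div_cancel₀ _ (ne_of_gt (pow_pos hcO _))]
  exact mul_left_cancel₀ (ne_of_gt (pow_pos hcO _)) key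

lemma tv_sq_le_klterm (hpnn : ∀ e c o, 0 ≤ p e c o) (hpsum' : ∀ e c, ∑ o, p e c o = 1)
    (h : Fin H) (o : Fin H → O) (hpos : 0 < pref p ctx estar (h : ℕ) o) :
    tvterm p ctx estar h o ^ 2 ≤ klterm p ctx estar h o := by
  have hprefW : pref p ctx estar (h : ℕ) o ≤ wsum p ctx (h : ℕ) o :=
    single_le_sum (f := fun e => pref p ctx e (h : ℕ) o)
      (fun e _ => pref_nonneg p ctx hpnn e _ o) (mem_univ estar)
  have hW : 0 < wsum p ctx (h : ℕ) o := lt_of_lt_of_le hpos hprefW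
  have hQnn : ∀ v, 0 ≤ wnum p ctx h o v / wsum p ctx (h : ℕ) o := fun v =>
    div_nonneg (sum_nonneg fun e _ =>
      mul_nonneg (pref_nonneg p ctx hpnn e _ o) (hpnn _ _ _)) hW.le
  have hQs : ∑ v, wnum p ctx h o v / wsum p ctx (h : ℕ) o = 1 := by
    rw [← sum_div]
    have : ∑ v, wnum p ctx h o v = wsum p ctx (h : ℕ) o := by
      unfold wnum wsum
      rw [Finset.sum_comm]
      refine sum_congr rfl fun e _ => ?_
      rw [← mul_sum, hpsum', mul_one]
    rw [this, div_self (ne_of_gt hW)]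
  have hQpos : ∀ v, 0 < p estar (ctx o h) v → 0 < wnum p ctx h o v / wsum p ctx (h : ℕ) o := by
    intro v hv
    refine div_pos (lt_of_lt_of_le (mul_pos hpos hv) ?_) hW
    exact single_le_sum (f := fun e => pref p ctx e (h : ℕ) o * p e (ctx o h) v)
      (fun e _ => mul_nonneg (pref_nonneg p ctx hpnn e _ o) (hpnn _ _ _)) (mem_univ estar)
  have main := tv_sq_le_kl (p estar (ctx o h))
    (fun v => wnum p ctx h o v / wsum p ctx (h : ℕ) o)
    (fun v => hpnn _ _ _) hQnn (hpsum' _ _) hQs hQpos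
  have heq : ∑ v, p estar (ctx o h) v *
      (if 0 < p estar (ctx o h) v then
        Real.log (p estar (ctx o h) v / (wnum p ctx h o v / wsum p ctx (h : ℕ) o)) else 0)
      = klterm p ctx estar h o := by
    unfold klterm ell
    refine sum_congr rfl fun v _ => ?_
    by_cases hv : 0 < p estar (ctx o h) v
    · rw [if_pos hv, if_pos ⟨hv, hpos⟩, div_div_eq_mul_div]
    · rw [if_neg hv, if_neg (by tauto)]
  rw [heq] at main
  exact main

include hctx hpsum in
lemma pref_total [Nonempty O] : ∑ o : Fin H → O, pref p ctx estar H o = 1 := by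
  have hcO : (0 : ℝ) < (Fintype.card O : ℝ) := by exact_mod_cast Fintype.card_pos
  have h := lemA p ctx estar hctx hpsum H 0 (by omega) (fun _ => 1) (fun _ _ _ _ => rfl)
  simp only [mul_one, pref_zero] at h
  rw [sum_const, card_univ] at h
  have hcard : ((Fintype.card (Fin H → O) : ℕ) : ℝ) = (Fintype.card O : ℝ) ^ H := by
    rw [Fintype.card_fun, Fintype.card_fin]
    push_cast
    rfl
  rw [nsmul_eq_mul, hcard, mul_one] at h
  exact mul_left_cancel₀ (ne_of_gt (pow_pos hcO H)) (by rw [h, mul_one])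

end lemmas


end VovkProof



open VovkProof in
/-- Vovk's aggregating algorithm guarantee: under realizability by an expert `estar`
(outcomes at each round h are drawn from `p estar (ctx o h)` given the past, so that the
probability of a full outcome sequence o is ∏_h p estar (ctx o h) (o h)), the exponential
weights predictions q̂_h satisfy (1/H) Σ_h E[D_TV(q̂_h, p^{e*}(c_h))] ≤ √(log|E|/H). -/
theorem vovk_aggregation_guarantee
    (H : ℕ) (hH : 0 < H)
    (C O E : Type) [Fintype C] [Fintype O] [Fintype E] [Nonempty O] [Nonempty E]
    (p : E → C → O → ℝ)
    (hpnn : ∀ e c o, 0 ≤ p e c o) (hpsum : ∀ e c, ∑ o, p e c o = 1)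
    (estar : E)
    -- nature's (adaptive) choice of contexts: the context at round h depends only
    -- on the outcomes of the earlier rounds
    (ctx : (Fin H → O) → Fin H → C)
    (hctx : ∀ o o' h, (∀ j : Fin H, j < h → o j = o' j) → ctx o h = ctx o' h) :
    (1 / H : ℝ) *
      ∑ o : Fin H → O,
        (∏ h, p estar (ctx o h) (o h)) *
          ∑ h, (1 / 2 : ℝ) * ∑ oo : O,
            |(∑ e, (∏ j ∈ univ.filter (fun j => j < h), p e (ctx o j) (o j)) * p e (ctx o h) oo)
                / (∑ e, ∏ j ∈ univ.filter (fun j => j < h), p e (ctx o j) (o j))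
              - p estar (ctx o h) oo|
      ≤ Real.sqrt (Real.log (Fintype.card E) / H) := by
  classical
  have hH' : (0 : ℝ) < (H : ℝ) := by exact_mod_cast hH
  have hLnn : 0 ≤ Real.log (Fintype.card E) :=
    Real.log_nonneg (by exact_mod_cast Nat.one_le_iff_ne_zero.2 (Fintype.card_ne_zero (α := E)))
  have hsum1 := pref_total p ctx estar hctx hpsum
  have hprefnn : ∀ o : Fin H → O, 0 ≤ pref p ctx estar H o :=
    fun o => pref_nonneg p ctx hpnn estar H o
  have htvnn : ∀ (h : Fin H) (o : Fin H → O), 0 ≤ tvterm p ctx estar h o := fun h o =>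
    mul_nonneg (by norm_num) (sum_nonneg fun v _ => abs_nonneg _)
  -- rewrite the goal in terms of `pref` and `tvterm`
  have hLHS : ∑ o : Fin H → O,
        (∏ h, p estar (ctx o h) (o h)) *
          ∑ h, (1 / 2 : ℝ) * ∑ oo : O,
            |(∑ e, (∏ j ∈ univ.filter (fun j => j < h), p e (ctx o j) (o j)) * p e (ctx o h) oo)
                / (∑ e, ∏ j ∈ univ.filter (fun j => j < h), p e (ctx o j) (o j))
              - p estar (ctx o h) oo|
      = ∑ o : Fin H → O, pref p ctx estar H o * ∑ h, tvterm p ctx estar h o := by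
    refine Finset.sum_congr rfl fun o _ => ?_
    congr 1
    · show (∏ h, p estar (ctx o h) (o h)) = pref p ctx estar H o
      unfold pref
      rw [filter_lt_H]
  rw [hLHS]
  set A : ℝ := ∑ o : Fin H → O, pref p ctx estar H o * ∑ h, tvterm p ctx estar h o with hAdef
  have hAnn : 0 ≤ A :=
    sum_nonneg fun o _ => mul_nonneg (hprefnn o) (sum_nonneg fun h _ => htvnn h o)
  have hAform : A = ∑ x : (Fin H → O) × Fin H,
      pref p ctx estar H x.1 * tvterm p ctx estar x.2 x.1 := by
    rw [hAdef, Fintype.sum_prod_type]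
    exact sum_congr rfl fun o _ => by rw [mul_sum]
  -- second moment bound
  have hchain : ∑ x : (Fin H → O) × Fin H,
      pref p ctx estar H x.1 * tvterm p ctx estar x.2 x.1 ^ 2 ≤ Real.log (Fintype.card E) := by
    calc ∑ x : (Fin H → O) × Fin H, pref p ctx estar H x.1 * tvterm p ctx estar x.2 x.1 ^ 2
        ≤ ∑ x : (Fin H → O) × Fin H, pref p ctx estar H x.1 * klterm p ctx estar x.2 x.1 := by
          refine sum_le_sum fun x _ => ?_
          by_cases h0 : 0 < pref p ctx estar H x.1
          · exact mul_le_mul_of_nonneg_left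
              (tv_sq_le_klterm p ctx estar hpnn hpsum x.2 x.1
                (pref_pos p ctx estar hpnn x.1 h0 _)) (hprefnn _)
          · have hz : pref p ctx estar H x.1 = 0 := le_antisymm (not_lt.1 h0) (hprefnn _)
            rw [hz, zero_mul, zero_mul]
      _ = ∑ h : Fin H, ∑ o : Fin H → O, pref p ctx estar H o * klterm p ctx estar h o := by
          rw [Fintype.sum_prod_type, Finset.sum_comm]
      _ = ∑ h : Fin H, ∑ o : Fin H → O, pref p ctx estar H o * ell p ctx estar h o (o h) :=
          sum_congr rfl fun h _ => tower p ctx estar hctx hpsum h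
      _ = ∑ o : Fin H → O, pref p ctx estar H o * ∑ h, ell p ctx estar h o (o h) := by
          rw [Finset.sum_comm]
          exact sum_congr rfl fun o _ => (mul_sum _ _ _).symm
      _ ≤ ∑ o : Fin H → O, pref p ctx estar H o * Real.log (Fintype.card E) := by
          refine sum_le_sum fun o _ => ?_
          by_cases h0 : 0 < pref p ctx estar H o
          · exact mul_le_mul_of_nonneg_left (telescope p ctx estar hpnn o h0) (hprefnn o)
          · have hz : pref p ctx estar H o = 0 := le_antisymm (not_lt.1 h0) (hprefnn _)
            rw [hz, zero_mul, zero_mul]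
      _ = Real.log (Fintype.card E) := by rw [← sum_mul, hsum1, one_mul]
  have hsumpref : ∑ x : (Fin H → O) × Fin H, pref p ctx estar H x.1 = (H : ℝ) := by
    rw [Fintype.sum_prod_type]
    simp only [sum_const, card_univ, Fintype.card_fin, nsmul_eq_mul]
    rw [← mul_sum, hsum1, mul_one]
  -- Cauchy-Schwarz
  have hA2 : A ^ 2 ≤ (H : ℝ) * Real.log (Fintype.card E) := by
    have cs := Finset.sum_mul_sq_le_sq_mul_sq univ
      (fun x : (Fin H → O) × Fin H => Real.sqrt (pref p ctx estar H x.1))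
      (fun x : (Fin H → O) × Fin H =>
        Real.sqrt (pref p ctx estar H x.1) * tvterm p ctx estar x.2 x.1)
    have e1 : ∀ x : (Fin H → O) × Fin H,
        Real.sqrt (pref p ctx estar H x.1)
          * (Real.sqrt (pref p ctx estar H x.1) * tvterm p ctx estar x.2 x.1)
        = pref p ctx estar H x.1 * tvterm p ctx estar x.2 x.1 := by
      intro x
      rw [← mul_assoc, Real.mul_self_sqrt (hprefnn _)]
    have e2 : ∀ x : (Fin H → O) × Fin H,
        Real.sqrt (pref p ctx estar H x.1) ^ 2 = pref p ctx estar H x.1 := fun x =>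
      Real.sq_sqrt (hprefnn _)
    have e3 : ∀ x : (Fin H → O) × Fin H,
        (Real.sqrt (pref p ctx estar H x.1) * tvterm p ctx estar x.2 x.1) ^ 2
        = pref p ctx estar H x.1 * tvterm p ctx estar x.2 x.1 ^ 2 := by
      intro x
      rw [mul_pow, Real.sq_sqrt (hprefnn _)]
    rw [sum_congr rfl fun x _ => e1 x, sum_congr rfl fun x _ => e2 x,
      sum_congr rfl fun x _ => e3 x, hsumpref] at cs
    rw [hAform]
    exact le_trans cs (mul_le_mul_of_nonneg_left hchain hH'.le)
  have hfin : A ≤ Real.sqrt ((H : ℝ) * Real.log (Fintype.card E)) := by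
    have h := Real.sqrt_le_sqrt hA2
    rwa [Real.sqrt_sq hAnn] at h
  have hs : Real.sqrt ((H : ℝ) * Real.log (Fintype.card E))
      = (H : ℝ) * Real.sqrt (Real.log (Fintype.card E) / (H : ℝ)) := by
    rw [show (H : ℝ) * Real.log (Fintype.card E)
        = (Real.log (Fintype.card E) / (H : ℝ)) * (H : ℝ) ^ 2 by field_simp]
    rw [Real.sqrt_mul (div_nonneg hLnn hH'.le), Real.sqrt_sq hH'.le]
    ring
  calc (1 / (H : ℝ)) * A
      ≤ (1 / (H : ℝ)) * ((H : ℝ) * Real.sqrt (Real.log (Fintype.card E) / (H : ℝ))) := by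
        refine mul_le_mul_of_nonneg_left ?_ (by positivity)
        rw [← hs]
        exact hfin
    _ = Real.sqrt (Real.log (Fintype.card E) / (H : ℝ)) := by
        field_simp
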